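/- Let V be a positive random variable and R_1,…,R_n i.i.d. standard exponential random variables independent of V. Let φ^{−1}(s) = E[e^{−sV}] be the Laplace–Stieltjes transform of V, with inverse φ. Define U_i = φ^{−1}(R_i/V). Then the random vector (U_1,…,U_n) has the Archimedean copula C(u_1,…,u_n) = φ^{−1}(φ(u_1)+⋯+φ(u_n)) as its joint distribution function, and each U_i is uniformly distributed on [0,1]. -/

import Mathlib

open MeasureTheory ProbabilityTheory Set

open scoped ENNReal


lemma expMeasure_singleton (t : ℝ) : expMeasure 1 {t} = 0 := by
  rw [expMeasure, gammaMeasure, withDensity_apply _ (measurableSet_singleton t)]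
  rw [setLIntegral_measure_zero _ _ (by simp)]

lemma expMeasure_Iio_zero : expMeasure 1 (Iio 0) = 0 := by
  rw [expMeasure, gammaMeasure, withDensity_apply _ measurableSet_Iio]
  have := lintegral_exponentialPDF_of_nonpos (r := 1) (x := 0) le_rfl
  simpa [exponentialPDF, exponentialPDFReal, gammaPDF] using this

lemma expMeasure_Ici {t : ℝ} (ht : 0 ≤ t) :
    expMeasure 1 (Ici t) = ENNReal.ofReal (Real.exp (-t)) := by
  haveI : IsProbabilityMeasure (expMeasure 1) := isProbabilityMeasure_gammaMeasure zero_lt_one one_pos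
  have hIic : expMeasure 1 (Iic t) = ENNReal.ofReal (1 - Real.exp (-t)) := by
    rw [expMeasure, gammaMeasure, withDensity_apply _ measurableSet_Iic]
    have := lintegral_exponentialPDF_eq_antiDeriv (r := 1) one_pos t
    simp only [one_mul, if_pos ht] at this
    simpa [exponentialPDF, exponentialPDFReal, gammaPDF] using this
  have hIio : expMeasure 1 (Iio t) = ENNReal.ofReal (1 - Real.exp (-t)) := by
    rw [← hIic]
    refine measure_congr ?_
    rw [MeasureTheory.ae_eq_set]
    refine ⟨by simp, ?_⟩
    rw [show Iic t \ Iio t = {t} by ext x; simp [le_antisymm_iff, and_comm]]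
    exact expMeasure_singleton t
  have hc : expMeasure 1 (Ici t) = 1 - ENNReal.ofReal (1 - Real.exp (-t)) := by
    rw [← Set.compl_Iio, measure_compl measurableSet_Iio (measure_ne_top _ _), hIio,
      measure_univ]
  rw [hc]
  have h1 : Real.exp (-t) ≤ 1 := by
    calc Real.exp (-t) ≤ Real.exp 0 := Real.exp_le_exp.mpr (by linarith)
    _ = 1 := Real.exp_zero
  rw [show (1 : ℝ≥0∞) = ENNReal.ofReal ((1 - Real.exp (-t)) + Real.exp (-t)) by norm_num,
    ENNReal.ofReal_add (by linarith) (Real.exp_pos _).le,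
    ENNReal.add_sub_cancel_left ENNReal.ofReal_ne_top]

/-- Marshall–Olkin representation: if `V > 0` has Laplace–Stieltjes
transform `φ⁻¹`, `R 1, …, R n` are i.i.d. standard exponentials independent of `V`, and
`U i = φ⁻¹(R i / V)`, then `(U 1, …, U n)` has joint distribution function the Archimedean
copula `φ⁻¹(φ u₁ + ⋯ + φ uₙ)`, and each `U i` is uniform on `[0,1]`. -/
theorem stmt11 {Ω : Type*} [MeasurableSpace Ω] (μ : Measure Ω) [IsProbabilityMeasure μ]
    (n : ℕ) (V : Ω → ℝ) (R : Fin n → Ω → ℝ)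
    (hV : Measurable V) (hVpos : ∀ᵐ ω ∂μ, 0 < V ω)
    (hR : ∀ i, Measurable (R i))
    (hindep : iIndepFun
      (fun o : Option (Fin n) => Option.elim o V (fun i => R i)) μ)
    (hexp : ∀ i, Measure.map (R i) μ = expMeasure 1)
    (φinv φ : ℝ → ℝ)
    (hLS : ∀ s, 0 ≤ s → φinv s = ∫ ω, Real.exp (-s * V ω) ∂μ)
    (hφ_nonneg : ∀ u ∈ Ioc (0:ℝ) 1, 0 ≤ φ u)
    (hφ : ∀ u ∈ Ioc (0:ℝ) 1, φinv (φ u) = u) :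
    (∀ u : Fin n → ℝ, (∀ i, u i ∈ Ioc (0:ℝ) 1) →
      μ {ω | ∀ i, φinv (R i ω / V ω) ≤ u i} =
        ENNReal.ofReal (φinv (∑ i, φ (u i)))) ∧
    (∀ i : Fin n, ∀ u ∈ Ioc (0:ℝ) 1,
      μ {ω | φinv (R i ω / V ω) ≤ u} = ENNReal.ofReal u) := by
  classical
  haveI : IsProbabilityMeasure (expMeasure 1) := isProbabilityMeasure_gammaMeasure zero_lt_one one_pos
  have hW : ∀ o : Option (Fin n), Measurable (Option.elim o V fun i => R i) := by
    rintro (_ | i)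
    · exact hV
    · exact hR i
  set F : Ω → (Option (Fin n) → ℝ) := fun ω o => Option.elim o V (fun i => R i) ω with hF_def
  have hF : Measurable F := measurable_pi_lambda _ hW
  haveI hprob : ∀ o : Option (Fin n),
      IsProbabilityMeasure (Measure.map (Option.elim o V fun i => R i) μ) :=
    fun o => Measure.isProbabilityMeasure_map (hW o).aemeasurable
  haveI hsf : ∀ o : Option (Fin n),
      SigmaFinite (Measure.map (Option.elim o V fun i => R i) μ) := fun o => inferInstance
  have hmap : Measure.map F μ
      = Measure.pi (fun o => Measure.map (Option.elim o V fun i => R i) μ) := by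
    refine (Measure.pi_eq (μ' := Measure.map F μ)
      (μ := fun o => Measure.map (Option.elim o V fun i => R i) μ) fun s hs => ?_).symm
    rw [Measure.map_apply hF (MeasurableSet.univ_pi hs)]
    have hset : F ⁻¹' (univ.pi s)
        = ⋂ o ∈ Finset.univ, (Option.elim o V fun i => R i) ⁻¹' s o := by
      ext ω; simp [F, Set.mem_pi]
    rw [hset, hindep.measure_inter_preimage_eq_mul Finset.univ (fun o _ => hs o)]
    exact Finset.prod_congr rfl fun o _ => (Measure.map_apply (hW o) (hs o)).symm
  -- integrability
  have hint : ∀ t : ℝ, 0 ≤ t → Integrable (fun ω => Real.exp (-t * V ω)) μ := by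
    intro t ht
    refine Integrable.mono' (integrable_const 1)
      ((Real.measurable_exp.comp (hV.const_mul (-t))).aestronglyMeasurable) ?_
    filter_upwards [hVpos] with ω hω
    rw [Real.norm_eq_abs, abs_of_pos (Real.exp_pos _)]
    calc Real.exp (-t * V ω) ≤ Real.exp 0 := Real.exp_le_exp.mpr (by nlinarith)
    _ = 1 := Real.exp_zero
  -- monotonicity of φinv
  have hanti : ∀ a b : ℝ, 0 ≤ a → a ≤ b → φinv b ≤ φinv a := by
    intro a b ha hab
    rw [hLS a ha, hLS b (ha.trans hab)]
    refine integral_mono_ae (hint b (ha.trans hab)) (hint a ha) ?_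
    filter_upwards [hVpos] with ω hω
    exact Real.exp_le_exp.mpr (by nlinarith)
  have hstrict : ∀ a b : ℝ, 0 ≤ a → a < b → φinv b < φinv a := by
    intro a b ha hab
    have hb : 0 ≤ b := ha.trans hab.le
    have hposf : ∀ᵐ ω ∂μ, 0 < Real.exp (-a * V ω) - Real.exp (-b * V ω) := by
      filter_upwards [hVpos] with ω hω
      have := Real.exp_lt_exp.mpr (show -b * V ω < -a * V ω by nlinarith)
      linarith
    have hsub : 0 < ∫ ω, (Real.exp (-a * V ω) - Real.exp (-b * V ω)) ∂μ := by
      rw [integral_pos_iff_support_of_nonneg_ae (hposf.mono fun ω h => h.le)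
        ((hint a ha).sub (hint b hb))]
      by_contra h
      push_neg at h
      have h0 : μ (Function.support fun ω => Real.exp (-a * V ω) - Real.exp (-b * V ω)) = 0 :=
        le_antisymm h (zero_le)
      have : ∀ᵐ ω ∂μ, (Real.exp (-a * V ω) - Real.exp (-b * V ω)) = 0 := by
        filter_upwards [measure_eq_zero_iff_ae_notMem.mp h0] with ω hω
        simpa [Function.mem_support] using hω
      obtain ⟨ω, h1, h2⟩ := (this.and hposf).exists
      linarith
    rw [integral_sub (hint a ha) (hint b hb)] at hsub
    rw [hLS a ha, hLS b hb]
    linarith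
  -- key computation
  have key : ∀ c : Fin n → ℝ, (∀ i, 0 ≤ c i) →
      μ {ω | ∀ i, c i * V ω ≤ R i ω} = ENNReal.ofReal (φinv (∑ i, c i)) := by
    intro c hc
    set s : ℝ := ∑ i, c i with hs_def
    have hs : 0 ≤ s := Finset.sum_nonneg fun i _ => hc i
    set A : Set (Option (Fin n) → ℝ) := {x | ∀ i, c i * x none ≤ x (some i)} with hA_def
    have hA : MeasurableSet A := by
      have : A = ⋂ i, {x : Option (Fin n) → ℝ | c i * x none ≤ x (some i)} := by
        ext x; simp [A]
      rw [this]
      exact MeasurableSet.iInter fun i =>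
        measurableSet_le (by fun_prop) (measurable_pi_apply (some i))
    have hEv : {ω | ∀ i, c i * V ω ≤ R i ω} = F ⁻¹' A := rfl
    rw [hEv, ← Measure.map_apply hF hA, hmap,
      ← Measure.pi_map_piOptionEquivProd (fun o => Measure.map (Option.elim o V fun i => R i) μ),
      Measure.map_apply (MeasurableEquiv.measurable _) hA]
    set e := MeasurableEquiv.piOptionEquivProd (fun _ : Option (Fin n) => ℝ) with he_def
    set B : Set ((Fin n → ℝ) × ℝ) := {p | ∀ i, c i * p.2 ≤ p.1 i} with hB_def
    have hpre : e.symm ⁻¹' A = B := rfl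
    have hB : MeasurableSet B := hpre ▸ e.symm.measurable hA
    rw [hpre]
    have hpi_exp : (Measure.pi fun i : Fin n =>
        Measure.map (Option.elim (some i) V fun j => R j) μ)
        = Measure.pi fun _ : Fin n => expMeasure 1 := by
      congr 1; funext i; exact hexp i
    rw [hpi_exp, Measure.prod_apply_symm hB,
      show (Measure.map (Option.elim (none : Option (Fin n)) V fun i => R i) μ)
        = Measure.map V μ from rfl]
    have hinner : ∀ v : ℝ, (fun r : Fin n → ℝ => (r, v)) ⁻¹' B
        = univ.pi fun i => Ici (c i * v) := by
      intro v; ext r; simp [B, Set.mem_pi, Pi.le_def]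
    have hν_pos : ∀ᵐ v ∂(Measure.map V μ), 0 < v := by
      rw [MeasureTheory.ae_map_iff hV.aemeasurable measurableSet_Ioi]
      exact hVpos
    have hcongr : ∫⁻ v, (Measure.pi fun _ : Fin n => expMeasure 1)
          ((fun r : Fin n → ℝ => (r, v)) ⁻¹' B) ∂(Measure.map V μ)
        = ∫⁻ v, ENNReal.ofReal (Real.exp (-s * v)) ∂(Measure.map V μ) := by
      refine lintegral_congr_ae ?_
      filter_upwards [hν_pos] with v hv
      rw [hinner v, Measure.pi_pi]
      have h1 : ∀ i : Fin n, expMeasure 1 (Ici (c i * v))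
          = ENNReal.ofReal (Real.exp (-(c i * v))) :=
        fun i => expMeasure_Ici (mul_nonneg (hc i) hv.le)
      calc ∏ i, expMeasure 1 (Ici (c i * v))
          = ∏ i, ENNReal.ofReal (Real.exp (-(c i * v))) := Finset.prod_congr rfl fun i _ => h1 i
        _ = ENNReal.ofReal (∏ i, Real.exp (-(c i * v))) := by
            rw [← ENNReal.ofReal_prod_of_nonneg]
            intro i _; exact (Real.exp_pos _).le
        _ = ENNReal.ofReal (Real.exp (∑ i, -(c i * v))) := by rw [Real.exp_sum]
        _ = ENNReal.ofReal (Real.exp (-s * v)) := by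
            congr 2
            rw [hs_def, neg_mul, Finset.sum_mul, Finset.sum_neg_distrib]
    have hm : Measurable fun v : ℝ => ENNReal.ofReal (Real.exp (-s * v)) :=
      (by fun_prop : Measurable fun v : ℝ => Real.exp (-s * v)).ennreal_ofReal
    rw [hcongr, lintegral_map hm hV]
    rw [← ofReal_integral_eq_lintegral_ofReal (hint s hs)
      (Filter.Eventually.of_forall fun ω => (Real.exp_pos _).le)]
    rw [hLS s hs]
  -- nonnegativity of R i a.e.
  have hRnn : ∀ i, ∀ᵐ ω ∂μ, 0 ≤ R i ω := by
    intro i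
    have h0 : μ (R i ⁻¹' (Iio 0)) = 0 := by
      rw [← Measure.map_apply (hR i) measurableSet_Iio, hexp i]
      exact expMeasure_Iio_zero
    filter_upwards [measure_eq_zero_iff_ae_notMem.mp h0] with ω hω
    simpa using not_lt.mp (by simpa using hω)
  have hae : ∀ᵐ ω ∂μ, 0 < V ω ∧ ∀ i, 0 ≤ R i ω := hVpos.and (ae_all_iff.mpr hRnn)
  -- pointwise iff
  have hiff : ∀ u ∈ Ioc (0:ℝ) 1, ∀ ω : Ω, 0 < V ω → ∀ r : ℝ, 0 ≤ r →
      (φinv (r / V ω) ≤ u ↔ φ u * V ω ≤ r) := by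
    intro u hu ω hω r hr
    have hcn := hφ_nonneg u hu
    constructor
    · intro h
      by_contra hlt
      push_neg at hlt
      have h2 : r / V ω < φ u := (div_lt_iff₀ hω).mpr hlt
      have h3 : φinv (φ u) < φinv (r / V ω) := hstrict _ _ (div_nonneg hr hω.le) h2
      rw [hφ u hu] at h3
      linarith
    · intro h
      have h2 : φ u ≤ r / V ω := (le_div_iff₀ hω).mpr h
      have h3 : φinv (r / V ω) ≤ φinv (φ u) := hanti _ _ hcn h2
      rwa [hφ u hu] at h3
  refine ⟨?_, ?_⟩
  · intro u hu
    rw [← key (fun i => φ (u i)) (fun i => hφ_nonneg _ (hu i))]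
    refine measure_congr ?_
    rw [Filter.eventuallyEq_set]
    filter_upwards [hae] with ω hω
    exact forall_congr' fun i => hiff (u i) (hu i) ω hω.1 (R i ω) (hω.2 i)
  · intro i u hu
    have hkey := key (fun j => if j = i then φ u else 0)
      (fun j => by by_cases h : j = i <;> simp [h, hφ_nonneg u hu])
    rw [show (∑ j, if j = i then φ u else 0) = φ u by simp] at hkey
    rw [hφ u hu] at hkey
    rw [← hkey]
    refine measure_congr ?_
    rw [Filter.eventuallyEq_set]
    filter_upwards [hae] with ω hω
    constructor
    · intro h j
      by_cases hj : j = i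
      · subst hj
        simpa using (hiff u hu ω hω.1 (R j ω) (hω.2 j)).mp h
      · simpa [hj] using hω.2 j
    · intro h
      have h2 := h i
      simp only [if_pos rfl] at h2
      exact (hiff u hu ω hω.1 (R i ω) (hω.2 i)).mpr h2
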